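/- arXiv:1108.1522 — 6 statements merged into one kernel-verified Lean document; each statement's English description precedes it below -/
import Mathlib

section
/- Let H be an invertible N×N complex matrix, P an N×N permutation matrix, γ ≥ 0 a real number, a ∈ ℂᴺ, and A = diag(a₁,…,a_N). Define Q = I + γ² P H⁻¹ H⁻ᴴ Pᵀ and the matrix S with entries s_{ij} = Q_{ji} · [(H*)⁻¹ H⁻ᵀ]_{ij}. Then for the precoder G = H⁻ᵀ A P H⁻¹, the relay transmit power satisfies Tr[G H Hᴴ Gᴴ + γ² G Gᴴ] = Tr[A Q Aᴴ (H*)⁻¹ H⁻ᵀ] = aᴴ S a = Σ_{i,j} conj(a_i) s_{ij} a_j. -/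
open Matrix

/-- relay transmit power of the zero-forcing precoder equals the quadratic
form `aᴴ S a` where `s_{ij} = Q_{ji} [(H*)⁻¹ H⁻ᵀ]_{ij}` and
`Q = I + γ² P H⁻¹ H⁻ᴴ Pᵀ`. -/
theorem relay_power_eq_quadratic_form
    (N : ℕ) (hN : 1 ≤ N)
    (H : Matrix (Fin N) (Fin N) ℂ) (hH : IsUnit H.det)
    (π : Equiv.Perm (Fin N)) (P : Matrix (Fin N) (Fin N) ℂ) (hP : P = π.permMatrix ℂ)
    (γ : ℝ) (hγ : 0 ≤ γ)
    (a : Fin N → ℂ)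
    (A : Matrix (Fin N) (Fin N) ℂ) (hA : A = Matrix.diagonal a)
    (Q : Matrix (Fin N) (Fin N) ℂ)
    (hQ : Q = 1 + ((γ : ℂ)^2) • (P * H⁻¹ * (Hᴴ)⁻¹ * Pᵀ))
    (S : Matrix (Fin N) (Fin N) ℂ)
    (hS : ∀ i j, S i j = Q j i * (((H.map (starRingEnd ℂ))⁻¹ * (Hᵀ)⁻¹) i j))
    (G : Matrix (Fin N) (Fin N) ℂ) (hG : G = (Hᵀ)⁻¹ * A * P * H⁻¹) :
    (G * H * Hᴴ * Gᴴ + ((γ : ℂ)^2) • (G * Gᴴ)).trace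
        = (A * Q * Aᴴ * (H.map (starRingEnd ℂ))⁻¹ * (Hᵀ)⁻¹).trace ∧
    (A * Q * Aᴴ * (H.map (starRingEnd ℂ))⁻¹ * (Hᵀ)⁻¹).trace = star a ⬝ᵥ S *ᵥ a ∧
    star a ⬝ᵥ S *ᵥ a = ∑ i, ∑ j, (starRingEnd ℂ) (a i) * S i j * a j := by
  have hHc : IsUnit (Hᴴ).det := by
    rw [Matrix.det_conjTranspose]; exact hH.star
  have hPP : P * Pᴴ = 1 := by
    subst hP
    ext i j
    simp [Matrix.mul_apply, Equiv.Perm.permMatrix, PEquiv.toMatrix, Matrix.one_apply,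
      apply_ite (starRingEnd ℂ), Equiv.toPEquiv_apply, Finset.sum_ite_eq,
      EmbeddingLike.apply_eq_iff_eq, eq_comm]
  have hPH : Pᴴ = Pᵀ := by
    subst hP
    ext i j
    simp [Equiv.Perm.permMatrix, PEquiv.toMatrix, Equiv.toPEquiv_apply,
      apply_ite (star : ℂ → ℂ)]
  have hM : ((Hᵀ)⁻¹)ᴴ = (H.map (starRingEnd ℂ))⁻¹ := by
    rw [Matrix.conjTranspose_nonsing_inv]
    congr 1
  have hPPl : ∀ X : Matrix (Fin N) (Fin N) ℂ, P * (Pᴴ * X) = X := fun X => by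
    rw [← Matrix.mul_assoc, hPP, Matrix.one_mul]
  have e1 : G * H = (Hᵀ)⁻¹ * A * P := by
    rw [hG, Matrix.nonsing_inv_mul_cancel_right _ _ hH]
  have e2 : Gᴴ = (Hᴴ)⁻¹ * (Pᴴ * (Aᴴ * ((Hᵀ)⁻¹)ᴴ)) := by
    simp [hG, conjTranspose_mul, Matrix.conjTranspose_nonsing_inv, Matrix.mul_assoc]
  have e3 : G * H * Hᴴ * Gᴴ = (Hᵀ)⁻¹ * (A * Aᴴ) * ((Hᵀ)⁻¹)ᴴ := by
    rw [e1, e2]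
    simp only [Matrix.mul_assoc]
    rw [Matrix.mul_nonsing_inv_cancel_left _ _ hHc, hPPl]
  have e4 : G * Gᴴ
      = (Hᵀ)⁻¹ * (A * (P * H⁻¹ * (Hᴴ)⁻¹ * Pᵀ) * Aᴴ) * ((Hᵀ)⁻¹)ᴴ := by
    rw [hG, ← hPH]
    simp only [conjTranspose_mul, Matrix.conjTranspose_nonsing_inv, Matrix.mul_assoc]
  have key : G * H * Hᴴ * Gᴴ + ((γ : ℂ)^2) • (G * Gᴴ)
      = (Hᵀ)⁻¹ * (A * Q * Aᴴ) * ((Hᵀ)⁻¹)ᴴ := by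
    rw [e3, e4, hQ]
    simp only [Matrix.mul_add, Matrix.add_mul, Matrix.mul_one, Matrix.one_mul,
      Matrix.mul_smul, Matrix.smul_mul, Matrix.mul_assoc]
    try rfl
  have tr1 : (G * H * Hᴴ * Gᴴ + ((γ : ℂ)^2) • (G * Gᴴ)).trace
      = (A * Q * Aᴴ * (H.map (starRingEnd ℂ))⁻¹ * (Hᵀ)⁻¹).trace := by
    rw [key, ← Matrix.trace_mul_cycle, hM]
    try simp only [Matrix.mul_assoc]
  refine ⟨tr1, ?_, ?_⟩
  · have hAQA : ∀ i j, (A * Q * Aᴴ) i j = a i * Q i j * (starRingEnd ℂ) (a j) := by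
      intro i j
      subst hA
      simp [Matrix.diagonal_mul, Matrix.mul_diagonal, Matrix.diagonal_conjTranspose,
        Pi.star_apply]
    have trXY : ∀ X Y : Matrix (Fin N) (Fin N) ℂ,
        (X * Y).trace = ∑ i, ∑ j, X i j * Y j i := by
      intro X Y
      simp [Matrix.trace, Matrix.diag, Matrix.mul_apply]
    have expand : (A * Q * Aᴴ * (H.map (starRingEnd ℂ))⁻¹ * (Hᵀ)⁻¹).trace
        = ∑ i, ∑ j, (A * Q * Aᴴ) i j
            * ((H.map (starRingEnd ℂ))⁻¹ * (Hᵀ)⁻¹) j i := by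
      rw [Matrix.mul_assoc (A * Q * Aᴴ), trXY]
    rw [expand]
    simp only [dotProduct, Matrix.mulVec, dotProduct, Pi.star_apply, hS, hAQA]
    rw [Finset.sum_comm]
    refine Finset.sum_congr rfl fun i _ => ?_
    rw [Finset.mul_sum]
    refine Finset.sum_congr rfl fun j _ => ?_
    simp only [starRingEnd_apply]
    ring
  · simp only [dotProduct, Matrix.mulVec, dotProduct, Pi.star_apply, Finset.mul_sum]
    refine Finset.sum_congr rfl fun i _ => Finset.sum_congr rfl fun j _ => ?_
    simp only [starRingEnd_apply]
    ring
end

section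
/- (Lemma 1) Consider the maxmin problem: minimize ε ≥ 0 over vectors a ∈ ℂᴺ with all entries nonzero, subject to q_i − 1 + σ²/|a_i|² ≤ ε for every i = 1,…,N and Re(aᴴ S a) ≤ p, where σ > 0 and p > 0. Then every optimal solution (a, ε) of this problem (i.e., a feasible point whose ε equals the minimum over all feasible points) satisfies the relay power constraint with equality: Re(aᴴ S a) = p. -/
open Matrix

/-- Lemma 1: every optimal solution of the maxmin problem satisfies the
relay power constraint with equality `Re(aᴴ S a) = p`. -/
theorem maxmin_optimal_power_constraint_tight
    (N : ℕ) (hN : 1 ≤ N)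
    (H : Matrix (Fin N) (Fin N) ℂ) (hH : IsUnit H.det)
    (π : Equiv.Perm (Fin N)) (P : Matrix (Fin N) (Fin N) ℂ) (hP : P = π.permMatrix ℂ)
    (γ σ p : ℝ) (hγ : 0 ≤ γ) (hσ : 0 < σ) (hp : 0 < p)
    (Q : Matrix (Fin N) (Fin N) ℂ)
    (hQ : Q = 1 + ((γ : ℂ)^2) • (P * H⁻¹ * (Hᴴ)⁻¹ * Pᵀ))
    (S : Matrix (Fin N) (Fin N) ℂ)
    (hS : ∀ i j, S i j = Q j i * (((H.map (starRingEnd ℂ))⁻¹ * (Hᵀ)⁻¹) i j))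
    (Feasible : (Fin N → ℂ) → ℝ → Prop)
    (hFeasible : ∀ a ε, Feasible a ε ↔
      (∀ i, a i ≠ 0) ∧ 0 ≤ ε ∧
      (∀ i, (Q i i).re - 1 + σ^2 / ‖a i‖^2 ≤ ε) ∧
      (star a ⬝ᵥ S *ᵥ a).re ≤ p)
    (a : Fin N → ℂ) (ε : ℝ)
    (hfeas : Feasible a ε)
    (hopt : ∀ a' ε', Feasible a' ε' → ε ≤ ε') :
    (star a ⬝ᵥ S *ᵥ a).re = p := by
  have hNE : Nonempty (Fin N) := ⟨⟨0, hN⟩⟩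
  rw [hFeasible] at hfeas
  obtain ⟨ha, hε0, hcon, hpow⟩ := hfeas
  by_contra hne
  have hlt : (star a ⬝ᵥ S *ᵥ a).re < p := lt_of_le_of_ne hpow hne
  set r := (star a ⬝ᵥ S *ᵥ a).re with hr
  -- diagonal entries of Q have real part ≥ 1
  have hPct : Pᴴ = Pᵀ := by
    subst hP
    ext i j
    simp [conjTranspose_apply, transpose_apply, Equiv.Perm.permMatrix,
      PEquiv.toMatrix_apply, apply_ite (star : ℂ → ℂ)]
  have hfac : P * H⁻¹ * (Hᴴ)⁻¹ * Pᵀ = (P * H⁻¹) * (P * H⁻¹)ᴴ := by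
    rw [conjTranspose_mul, conjTranspose_nonsing_inv, hPct]
    rw [Matrix.mul_assoc, Matrix.mul_assoc]
  have hq1 : ∀ i, 1 ≤ (Q i i).re := by
    intro i
    have hdiag : 0 ≤ (((P * H⁻¹) * (P * H⁻¹)ᴴ) i i).re := by
      rw [Matrix.mul_apply]
      rw [Complex.re_sum]
      apply Finset.sum_nonneg
      intro j _
      have : (P * H⁻¹) i j * ((P * H⁻¹)ᴴ) j i
          = (P * H⁻¹) i j * (starRingEnd ℂ) ((P * H⁻¹) i j) := by
        rw [conjTranspose_apply]; rfl
      rw [this, Complex.mul_conj]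
      simpa using Complex.normSq_nonneg ((P * H⁻¹) i j)
    have : (Q i i).re = 1 + γ ^ 2 * (((P * H⁻¹) * (P * H⁻¹)ᴴ) i i).re := by
      rw [hQ, hfac]
      simp only [Matrix.add_apply, Matrix.smul_apply, Matrix.one_apply_eq]
      have : ((γ : ℂ) ^ 2) = ((γ ^ 2 : ℝ) : ℂ) := by push_cast; ring
      rw [this, smul_eq_mul, Complex.add_re, Complex.one_re, Complex.re_ofReal_mul]
    rw [this]
    nlinarith [sq_nonneg γ]
  -- ε is strictly positive
  have hna : ∀ i, (0:ℝ) < ‖a i‖ ^ 2 := by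
    intro i
    exact pow_pos (norm_pos_iff.mpr (ha i)) 2
  -- choose scaling t
  obtain ⟨t, ht1, htp⟩ : ∃ t : ℝ, 1 < t ∧ t ^ 2 * r ≤ p := by
    rcases le_or_gt r 0 with h | h
    · exact ⟨2, one_lt_two, by nlinarith⟩
    · refine ⟨Real.sqrt (p / r), ?_, ?_⟩
      · rw [show (1:ℝ) = Real.sqrt 1 by simp]
        apply Real.sqrt_lt_sqrt (by norm_num)
        rw [lt_div_iff₀ h]; linarith
      · rw [Real.sq_sqrt (by positivity)]
        rw [div_mul_cancel₀ _ (ne_of_gt h)]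
  have ht0 : (0:ℝ) < t := lt_trans one_pos ht1
  have ht2 : (1:ℝ) < t ^ 2 := by nlinarith
  -- the improvement amounts
  set δ : Fin N → ℝ := fun i => σ ^ 2 / ‖a i‖ ^ 2 - σ ^ 2 / (t ^ 2 * ‖a i‖ ^ 2) with hδ
  have hδpos : ∀ i, 0 < δ i := by
    intro i
    have h1 : σ ^ 2 / (t ^ 2 * ‖a i‖ ^ 2) < σ ^ 2 / ‖a i‖ ^ 2 := by
      apply div_lt_div_of_pos_left (pow_pos hσ 2) (hna i)
      nlinarith [hna i]
    simp only [hδ]; linarith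
  set m : ℝ := Finset.univ.inf' (Finset.univ_nonempty) δ with hm
  obtain ⟨i₀, _, hi₀⟩ := Finset.exists_mem_eq_inf' (Finset.univ_nonempty) δ
  have hmpos : 0 < m := by rw [hm, hi₀]; exact hδpos i₀
  have hmle : ∀ i, m ≤ δ i := fun i => Finset.inf'_le δ (Finset.mem_univ i)
  -- new candidate
  set a' : Fin N → ℂ := fun i => (t : ℂ) * a i with ha'
  have hnorm' : ∀ i, ‖a' i‖ ^ 2 = t ^ 2 * ‖a i‖ ^ 2 := by
    intro i
    simp only [ha', norm_mul, Complex.norm_real, Real.norm_eq_abs,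
      abs_of_pos ht0]
    ring
  -- quadratic form scaling
  have hquad : (star a' ⬝ᵥ S *ᵥ a').re = t ^ 2 * r := by
    have h1 : a' = (t : ℂ) • a := by funext i; simp [ha', smul_eq_mul]
    rw [h1, star_smul, smul_dotProduct, mulVec_smul, dotProduct_smul]
    simp only [smul_eq_mul, star_trivial]
    have : star ((t : ℂ)) = (t : ℂ) := by simp
    rw [this, ← mul_assoc]
    have : ((t:ℂ) * (t:ℂ)) = ((t^2 : ℝ) : ℂ) := by push_cast; ring
    rw [this, Complex.re_ofReal_mul]
  -- feasibility of (a', ε - m)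
  have hfeas' : Feasible a' (ε - m) := by
    rw [hFeasible]
    refine ⟨?_, ?_, ?_, ?_⟩
    · intro i
      simp only [ha', mul_ne_zero_iff]
      exact ⟨by exact_mod_cast ne_of_gt ht0, ha i⟩
    · have h1 : σ ^ 2 / ‖a i₀‖ ^ 2 ≤ ε := by
        have := hcon i₀
        have := hq1 i₀
        linarith
      have h2 : ε - m ≥ σ ^ 2 / (t ^ 2 * ‖a i₀‖ ^ 2) := by
        rw [hm, hi₀]
        simp only [hδ]
        linarith
      have h3 : 0 < σ ^ 2 / (t ^ 2 * ‖a i₀‖ ^ 2) :=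
        div_pos (pow_pos hσ 2) (mul_pos (pow_pos ht0 2) (hna i₀))
      linarith
    · intro i
      rw [hnorm' i]
      have := hcon i
      have := hmle i
      simp only [hδ] at this
      linarith
    · rw [hquad]
      exact htp
  have := hopt a' (ε - m) hfeas'
  linarith
end

section
/- (Proposition: equivalence of maxmin and QCQP) Let ε̃ ≥ 0 be the optimal value of the maxmin problem (minimize ε over a ∈ ℂᴺ with nonzero entries subject to q_i − 1 + σ²/|a_i|² ≤ ε for all i and Re(aᴴ S a) ≤ p), and assume σ > 0, p > 0 and that the optimum is attained. Then a vector a is an optimal solution of the maxmin problem if and only if a is an optimal solution of the quadratically constrained quadratic program: minimize Re(aᴴ S a) over a ∈ ℂᴺ subject to |a_i|² ≥ σ²/(ε̃ + 1 − q_i) for all i = 1,…,N. Moreover, the optimal value of this QCQP equals p. -/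
open Matrix

set_option maxHeartbeats 1600000 in
/-- Proposition: equivalence of maxmin and QCQP: if `εopt` is the attained optimal
value of the maxmin problem, then `a` is optimal for the maxmin problem iff `a` is optimal for
the QCQP `min Re(aᴴ S a)` subject to `|a_i|² ≥ σ²/(εopt + 1 − q_i)`, and the optimal value of the
QCQP equals `p`. -/
theorem maxmin_equiv_qcqp
    (N : ℕ) (hN : 1 ≤ N)
    (H : Matrix (Fin N) (Fin N) ℂ) (hH : IsUnit H.det)
    (π : Equiv.Perm (Fin N)) (P : Matrix (Fin N) (Fin N) ℂ) (hP : P = π.permMatrix ℂ)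
    (γ σ p : ℝ) (hγ : 0 ≤ γ) (hσ : 0 < σ) (hp : 0 < p)
    (Q : Matrix (Fin N) (Fin N) ℂ)
    (hQ : Q = 1 + ((γ : ℂ)^2) • (P * H⁻¹ * (Hᴴ)⁻¹ * Pᵀ))
    (S : Matrix (Fin N) (Fin N) ℂ)
    (hS : ∀ i j, S i j = Q j i * (((H.map (starRingEnd ℂ))⁻¹ * (Hᵀ)⁻¹) i j))
    -- the maxmin feasibility predicate
    (Feasible : (Fin N → ℂ) → ℝ → Prop)
    (hFeasible : ∀ a ε, Feasible a ε ↔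
      (∀ i, a i ≠ 0) ∧ 0 ≤ ε ∧
      (∀ i, (Q i i).re - 1 + σ^2 / ‖a i‖^2 ≤ ε) ∧
      (star a ⬝ᵥ S *ᵥ a).re ≤ p)
    -- the QCQP feasibility predicate at level εopt
    (εopt : ℝ) (hεopt : 0 ≤ εopt)
    (QFeasible : (Fin N → ℂ) → Prop)
    (hQFeasible : ∀ a, QFeasible a ↔
      ∀ i, σ^2 / (εopt + 1 - (Q i i).re) ≤ ‖a i‖^2)
    -- εopt is the attained optimal value of the maxmin problem
    (hattained : ∃ a₀, Feasible a₀ εopt)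
    (hoptval : ∀ a ε, Feasible a ε → εopt ≤ ε) :
    (∀ a : Fin N → ℂ,
        Feasible a εopt ↔
          (QFeasible a ∧ ∀ a', QFeasible a' →
            (star a ⬝ᵥ S *ᵥ a).re ≤ (star a' ⬝ᵥ S *ᵥ a').re)) ∧
    (∀ a : Fin N → ℂ,
        (QFeasible a ∧ ∀ a', QFeasible a' →
            (star a ⬝ᵥ S *ᵥ a).re ≤ (star a' ⬝ᵥ S *ᵥ a').re) →
        (star a ⬝ᵥ S *ᵥ a).re = p) := by

  -- unpack the attained optimum
  obtain ⟨a₀, ha₀⟩ := hattained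
  rw [hFeasible] at ha₀
  obtain ⟨ha₀ne, -, ha₀noise, ha₀pow⟩ := ha₀
  -- diagonal of Q has real part at least 1
  have hQdiag : ∀ i, 1 ≤ (Q i i).re := by
    intro i
    have hPt : Pᴴ = Pᵀ := by
      subst hP
      ext i j
      simp [Matrix.conjTranspose_apply, Matrix.transpose_apply, Equiv.Perm.permMatrix,
        PEquiv.toMatrix_apply, apply_ite (starRingEnd ℂ)]
    have hPH : (Hᴴ)⁻¹ * Pᵀ = (P * H⁻¹)ᴴ := by
      rw [Matrix.conjTranspose_mul, Matrix.conjTranspose_nonsing_inv, hPt]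
    have hM : P * H⁻¹ * (Hᴴ)⁻¹ * Pᵀ = (P * H⁻¹) * (P * H⁻¹)ᴴ := by
      rw [Matrix.mul_assoc, hPH]
    have hre : 0 ≤ (((P * H⁻¹) * (P * H⁻¹)ᴴ) i i).re := by
      rw [Matrix.mul_apply, Complex.re_sum]
      refine Finset.sum_nonneg fun j _ => ?_
      rw [Matrix.conjTranspose_apply]
      have : (P * H⁻¹) i j * star ((P * H⁻¹) i j)
          = ((Complex.normSq ((P * H⁻¹) i j) : ℝ) : ℂ) := Complex.mul_conj _
      rw [this]
      simpa using Complex.normSq_nonneg _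
    have hQii : Q i i = 1 + ((γ^2 : ℝ) : ℂ) * (((P * H⁻¹) * (P * H⁻¹)ᴴ) i i) := by
      rw [hQ, hM]
      simp [Matrix.add_apply, Matrix.smul_apply, Matrix.one_apply, smul_eq_mul]
    rw [hQii]
    simp only [Complex.add_re, Complex.one_re, Complex.re_ofReal_mul]
    nlinarith [sq_nonneg γ]
  -- denominators are positive
  have hd : ∀ i, 0 < εopt + 1 - (Q i i).re := by
    intro i
    have h1 := ha₀noise i
    have h2 : 0 < σ^2 / ‖a₀ i‖^2 :=
      div_pos (pow_pos hσ 2) (pow_pos (norm_pos_iff.mpr (ha₀ne i)) 2)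
    linarith
  have hεpos : 0 < εopt := by
    have h1 := hd ⟨0, hN⟩
    have h2 := hQdiag ⟨0, hN⟩
    have h3 := ha₀noise ⟨0, hN⟩
    have h4 : 0 < σ^2 / ‖a₀ ⟨0, hN⟩‖^2 :=
      div_pos (pow_pos hσ 2) (pow_pos (norm_pos_iff.mpr (ha₀ne _)) 2)
    linarith
  -- scaling of the quadratic form
  have hscale : ∀ (t : ℝ) (a : Fin N → ℂ),
      (star ((t : ℂ) • a) ⬝ᵥ S *ᵥ ((t : ℂ) • a)).re = t^2 * (star a ⬝ᵥ S *ᵥ a).re := by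
    intro t a
    have h1 : star ((t : ℂ) • a) = (t : ℂ) • star a := by
      ext i
      simp [Complex.star_def]
    rw [h1, Matrix.mulVec_smul, smul_dotProduct, dotProduct_smul]
    have h2 : (t : ℂ) • ((t : ℂ) • (star a ⬝ᵥ S *ᵥ a))
        = ((t^2 : ℝ) : ℂ) * (star a ⬝ᵥ S *ᵥ a) := by
      simp only [smul_eq_mul]
      push_cast
      ring
    rw [h2, Complex.re_ofReal_mul]
  -- QCQP feasible implies positive entries
  have hQpos : ∀ a, QFeasible a → ∀ i, 0 < ‖a i‖^2 := by
    intro a ha i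
    rw [hQFeasible] at ha
    exact lt_of_lt_of_le (div_pos (pow_pos hσ 2) (hd i)) (ha i)
  -- KEY LEMMA: any QCQP feasible point has power at least p
  have key : ∀ a, QFeasible a → p ≤ (star a ⬝ᵥ S *ᵥ a).re := by
    intro a ha
    by_contra hlt
    push_neg at hlt
    have hapos := hQpos a ha
    rw [hQFeasible] at ha
    set r := (star a ⬝ᵥ S *ᵥ a).re with hr
    obtain ⟨t, ht1, htp⟩ : ∃ t : ℝ, 1 < t ∧ t^2 * r ≤ p := by
      rcases le_or_gt r 0 with h | h
      · exact ⟨2, one_lt_two, by nlinarith⟩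
      · refine ⟨Real.sqrt (p / r), ?_, ?_⟩
        · rw [show (1 : ℝ) = Real.sqrt 1 from Real.sqrt_one.symm]
          exact Real.sqrt_lt_sqrt zero_le_one ((one_lt_div h).mpr hlt)
        · rw [Real.sq_sqrt (le_of_lt (div_pos hp h)), div_mul_cancel₀ _ (ne_of_gt h)]
    have ht0 : 0 < t := lt_trans one_pos ht1
    have ht2 : 1 < t^2 := by nlinarith
    have ht2' : 0 < t^2 := by positivity
    have hv1 : (t^2)⁻¹ < 1 := inv_lt_one_of_one_lt₀ ht2
    have hv0 : 0 < (t^2)⁻¹ := inv_pos.mpr ht2'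
    have hNe : (Finset.univ : Finset (Fin N)).Nonempty := ⟨⟨0, hN⟩, Finset.mem_univ _⟩
    set d := Finset.univ.inf' hNe (fun i => εopt + 1 - (Q i i).re) with hd_def
    have hdpos : 0 < d := (Finset.lt_inf'_iff hNe).mpr fun i _ => hd i
    have hdle : ∀ i, d ≤ εopt + 1 - (Q i i).re := fun i =>
      Finset.inf'_le _ (Finset.mem_univ i)
    have hdεopt : d ≤ εopt := by
      have h1 := hdle ⟨0, hN⟩
      have h2 := hQdiag ⟨0, hN⟩
      linarith
    set ε' := εopt - (1 - (t^2)⁻¹) * d with hε'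
    have hcoef : 0 < 1 - (t^2)⁻¹ := by linarith
    have hε'lt : ε' < εopt := by
      have := mul_pos hcoef hdpos
      rw [hε']
      linarith
    have hε'0 : 0 ≤ ε' := by
      have h7 : (1 - (t^2)⁻¹) * d ≤ 1 * d :=
        mul_le_mul_of_nonneg_right (by linarith) (le_of_lt hdpos)
      rw [hε']
      linarith
    have hfeas : Feasible ((t : ℂ) • a) ε' := by
      rw [hFeasible]
      refine ⟨?_, hε'0, ?_, ?_⟩
      · intro i
        have := hapos i
        have hai : a i ≠ 0 := by
          intro h
          rw [h] at this
          simp at this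
        simp [smul_ne_zero, Complex.ofReal_ne_zero, ne_of_gt ht0, hai]
      · intro i
        have hnorm : ‖((t : ℂ) • a) i‖^2 = t^2 * ‖a i‖^2 := by
          simp [norm_smul, mul_pow, sq_abs]
        rw [hnorm]
        have hn := hapos i
        have h2 : σ^2 / ‖a i‖^2 ≤ εopt + 1 - (Q i i).re := by
          rw [div_le_iff₀ hn]
          have := (div_le_iff₀ (hd i)).mp (ha i)
          nlinarith
        have h5 : σ^2 / (t^2 * ‖a i‖^2) = (σ^2 / ‖a i‖^2) * (t^2)⁻¹ := by
          rw [mul_comm, ← div_div, div_eq_mul_inv]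
        rw [h5]
        have h6 := hdle i
        nlinarith [mul_le_mul_of_nonneg_right h2 (le_of_lt hv0)]
      · rw [hscale]
        exact htp
    have := hoptval _ _ hfeas
    linarith
  -- per-index constraint equivalence: Feasible implies QFeasible
  have hto : ∀ a, Feasible a εopt → QFeasible a := by
    intro a hF
    rw [hFeasible] at hF
    obtain ⟨hne, -, hnoise, -⟩ := hF
    rw [hQFeasible]
    intro i
    have hn : 0 < ‖a i‖^2 := pow_pos (norm_pos_iff.mpr (hne i)) 2
    have h1 : σ^2 / ‖a i‖^2 ≤ εopt + 1 - (Q i i).re := by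
      have := hnoise i; linarith
    rw [div_le_iff₀ (hd i)]
    have := (div_le_iff₀ hn).mp h1
    nlinarith
  have hQa₀ : QFeasible a₀ := by
    apply hto
    rw [hFeasible]
    exact ⟨ha₀ne, hεopt, ha₀noise, ha₀pow⟩
  constructor
  · intro a
    constructor
    · intro hF
      have hQF := hto a hF
      rw [hFeasible] at hF
      exact ⟨hQF, fun a' ha' => le_trans hF.2.2.2 (key a' ha')⟩
    · rintro ⟨hQF, hmin⟩
      rw [hFeasible]
      have hpow : (star a ⬝ᵥ S *ᵥ a).re ≤ p := le_trans (hmin a₀ hQa₀) ha₀pow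
      have hne : ∀ i, a i ≠ 0 := by
        intro i
        have := hQpos a hQF i
        intro h
        rw [h] at this
        simp at this
      refine ⟨hne, hεopt, ?_, hpow⟩
      intro i
      have hn : 0 < ‖a i‖^2 := hQpos a hQF i
      rw [hQFeasible] at hQF
      have h1 := hQF i
      have h2 : σ^2 / ‖a i‖^2 ≤ εopt + 1 - (Q i i).re := by
        rw [div_le_iff₀ hn]
        have := (div_le_iff₀ (hd i)).mp h1
        nlinarith
      linarith
  · rintro a ⟨hQF, hmin⟩
    exact le_antisymm (le_trans (hmin a₀ hQa₀) ha₀pow) (key a hQF)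
end

section
/- (Proposition 3) Suppose γ = 0, i.e., no additional noise is introduced at the relay, so that Q = I, q_i = 1 for all i, and S is a diagonal matrix with diagonal entries s_{ii} = [(H*)⁻¹ H⁻ᵀ]_{ii}, which are real and strictly positive. Then every optimal solution a of the maxmin problem (minimize ε over a with nonzero entries subject to σ²/|a_i|² ≤ ε for all i and Re(aᴴ S a) ≤ p) satisfies |a_i|² = σ²/ε̃ for every i, where ε̃ is the optimal value; i.e., at the optimum every station has exactly the same post-processing noise power, so the maxmin problem and the equal-SNR problem (which imposes σ²/|a_i|² = ε for all i) have the same optimal solutions and the same optimal value. -/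
open Matrix

set_option maxHeartbeats 1000000 in
/-- Proposition 3: when no noise is introduced at the relay (`γ = 0`, so
`Q = I` and `q_i = 1`), every optimal solution of the maxmin problem has identical
post-processing noise power at every station, `|a_i|² = σ²/ε̃`; hence it is feasible for the
equal-SNR problem and the two problems have the same optimal value. -/
theorem maxmin_eq_equalSNR_of_no_relay_noise
    (N : ℕ) (hN : 1 ≤ N)
    (H : Matrix (Fin N) (Fin N) ℂ) (hH : IsUnit H.det)
    (π : Equiv.Perm (Fin N)) (P : Matrix (Fin N) (Fin N) ℂ) (hP : P = π.permMatrix ℂ)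
    (γ σ p : ℝ) (hγ : γ = 0) (hσ : 0 < σ) (hp : 0 < p)
    (Q : Matrix (Fin N) (Fin N) ℂ)
    (hQ : Q = 1 + ((γ : ℂ)^2) • (P * H⁻¹ * (Hᴴ)⁻¹ * Pᵀ))
    (S : Matrix (Fin N) (Fin N) ℂ)
    (hS : ∀ i j, S i j = Q j i * (((H.map (starRingEnd ℂ))⁻¹ * (Hᵀ)⁻¹) i j))
    -- the maxmin feasibility predicate
    (Feasible : (Fin N → ℂ) → ℝ → Prop)
    (hFeasible : ∀ a ε, Feasible a ε ↔
      (∀ i, a i ≠ 0) ∧ 0 ≤ ε ∧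
      (∀ i, (Q i i).re - 1 + σ^2 / ‖a i‖^2 ≤ ε) ∧
      (star a ⬝ᵥ S *ᵥ a).re ≤ p)
    -- the equal-SNR feasibility predicate
    (EqFeasible : (Fin N → ℂ) → ℝ → Prop)
    (hEqFeasible : ∀ a ε, EqFeasible a ε ↔
      (∀ i, a i ≠ 0) ∧ 0 ≤ ε ∧
      (∀ i, (Q i i).re - 1 + σ^2 / ‖a i‖^2 = ε) ∧
      (star a ⬝ᵥ S *ᵥ a).re ≤ p)
    -- (a, εopt) is an optimal solution of the maxmin problem
    (a : Fin N → ℂ) (εopt : ℝ)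
    (hfeas : Feasible a εopt)
    (hopt : ∀ a' ε', Feasible a' ε' → εopt ≤ ε') :
    (∀ i, ‖a i‖^2 = σ^2 / εopt) ∧
    EqFeasible a εopt ∧
    (∀ a' ε', EqFeasible a' ε' → εopt ≤ ε') := by
  -- Q is the identity
  have hQ1 : Q = 1 := by rw [hQ, hγ]; push_cast; simp
  subst hQ1
  -- inverse of the conjugated matrix
  have hA : (H.map (starRingEnd ℂ))⁻¹ = (H⁻¹).map (starRingEnd ℂ) := by
    have h1 : H.map (starRingEnd ℂ) = (Hᴴ)ᵀ := by
      ext i j; simp [Matrix.conjTranspose_apply]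
    rw [h1, ← Matrix.transpose_nonsing_inv, ← Matrix.conjTranspose_nonsing_inv]
    ext i j; simp [Matrix.conjTranspose_apply]
  have hB : (Hᵀ)⁻¹ = (H⁻¹)ᵀ := (Matrix.transpose_nonsing_inv H).symm
  set c : Fin N → ℝ := fun i => ∑ k, ‖H⁻¹ i k‖^2 with hc_def
  have hM : ∀ i : Fin N, ((H.map (starRingEnd ℂ))⁻¹ * (Hᵀ)⁻¹) i i = (c i : ℂ) := by
    intro i
    rw [hA, hB, Matrix.mul_apply, hc_def]
    rw [Complex.ofReal_sum]
    refine Finset.sum_congr rfl fun k _ => ?_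
    rw [Matrix.map_apply, Matrix.transpose_apply]
    rw [← Complex.normSq_eq_conj_mul_self, Complex.normSq_eq_norm_sq]
  have hc_pos : ∀ i, 0 < c i := by
    intro i
    have hsum : (H⁻¹ * H) i i = 1 := by
      rw [Matrix.nonsing_inv_mul H hH]; simp
    rcases (Finset.sum_nonneg fun k _ => sq_nonneg ‖H⁻¹ i k‖ : (0:ℝ) ≤ c i).lt_or_eq with h | h
    · exact h
    · exfalso
      have hz : ∀ k, H⁻¹ i k = 0 := by
        intro k
        have := (Finset.sum_eq_zero_iff_of_nonneg (fun k _ => sq_nonneg ‖H⁻¹ i k‖)).mp h.symm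
          k (Finset.mem_univ k)
        simpa [pow_eq_zero_iff] using this
      rw [Matrix.mul_apply] at hsum
      simp [hz] at hsum
  -- power formula
  have hSv : ∀ i j, S i j = (if j = i then ((c i : ℂ)) else 0) := by
    intro i j
    rw [hS i j, Matrix.one_apply]
    by_cases h : j = i
    · subst h; rw [hM]; simp
    · simp [h]
  have hpow : ∀ v : Fin N → ℂ, (star v ⬝ᵥ S *ᵥ v).re = ∑ i, c i * ‖v i‖^2 := by
    intro v
    have h1 : star v ⬝ᵥ S *ᵥ v = ∑ i, ((c i * ‖v i‖^2 : ℝ) : ℂ) := by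
      calc star v ⬝ᵥ S *ᵥ v = ∑ i, star (v i) * ∑ j, S i j * v j := by
            simp [dotProduct, Matrix.mulVec]
        _ = ∑ i, ((c i * ‖v i‖^2 : ℝ) : ℂ) := by
            refine Finset.sum_congr rfl fun i _ => ?_
            simp only [hSv, ite_mul, zero_mul]
            rw [Finset.sum_ite_eq']
            simp only [Finset.mem_univ, if_true]
            rw [show star (v i) * ((c i:ℂ) * v i) = (c i:ℂ) * (star (v i) * v i) by ring]
            rw [Complex.star_def, ← Complex.normSq_eq_conj_mul_self,
              Complex.normSq_eq_norm_sq]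
            push_cast
            ring
    rw [h1]
    rw [Complex.re_sum]
    refine Finset.sum_congr rfl fun i _ => ?_
    exact Complex.ofReal_re _
  -- basic facts from feasibility
  rw [hFeasible] at hfeas
  obtain ⟨hne, hε0, hnoise, hpower⟩ := hfeas
  have hnoise' : ∀ i, σ^2 / ‖a i‖^2 ≤ εopt := by
    intro i; have := hnoise i; simpa using this
  have hanorm : ∀ i : Fin N, (0:ℝ) < ‖a i‖^2 := fun i =>
    pow_pos (norm_pos_iff.mpr (hne i)) 2
  have i0 : Fin N := ⟨0, hN⟩
  have hεpos : 0 < εopt :=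
    lt_of_lt_of_le (div_pos (pow_pos hσ 2) (hanorm i0)) (hnoise' i0)
  rw [hpow] at hpower
  -- lower bound on each |a i|²
  have hge : ∀ i, σ^2 / εopt ≤ ‖a i‖^2 := by
    intro i
    rw [div_le_iff₀ hεpos]
    have := (div_le_iff₀ (hanorm i)).mp (hnoise' i)
    linarith
  -- key claim
  have key : ∀ i, ‖a i‖^2 = σ^2 / εopt := by
    intro i
    by_contra hnei
    have hlt : σ^2 / εopt < ‖a i‖^2 := lt_of_le_of_ne (hge i) (Ne.symm hnei)
    set b : Fin N → ℂ := fun j => if j = i then ((σ / Real.sqrt εopt : ℝ) : ℂ) else a j with hb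
    have hbi : ‖b i‖^2 = σ^2 / εopt := by
      have h1 : b i = ((σ / Real.sqrt εopt : ℝ) : ℂ) := by simp [hb]
      rw [h1, Complex.norm_real, Real.norm_eq_abs,
        abs_of_pos (div_pos hσ (Real.sqrt_pos.mpr hεpos)), div_pow, Real.sq_sqrt hεpos.le]
    have hbnorm : ∀ j, ‖b j‖^2 ≤ ‖a j‖^2 := by
      intro j
      by_cases h : j = i
      · subst h; rw [hbi]; exact hlt.le
      · simp [hb, h]
    have hbpos : ∀ j, (0:ℝ) < ‖b j‖^2 := by
      intro j
      by_cases h : j = i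
      · subst h; rw [hbi]; positivity
      · simpa [hb, h] using hanorm j
    have hbnoise : ∀ j, σ^2 / ‖b j‖^2 ≤ εopt := by
      intro j
      by_cases h : j = i
      · subst h; rw [hbi]
        have hx : σ^2 / (σ^2 / εopt) = εopt := by field_simp
        rw [hx]
      · simpa [hb, h] using hnoise' j
    set pb : ℝ := ∑ j, c j * ‖b j‖^2 with hpb
    have hpb_lt : pb < p := by
      have h1 : pb < ∑ j, c j * ‖a j‖^2 := by
        apply Finset.sum_lt_sum
        · intro j _
          exact mul_le_mul_of_nonneg_left (hbnorm j) (hc_pos j).le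
        · refine ⟨i, Finset.mem_univ i, ?_⟩
          have := hc_pos i
          rw [hbi]
          nlinarith
      linarith
    have hpb_pos : 0 < pb := by
      refine Finset.sum_pos (fun j _ => mul_pos (hc_pos j) (hbpos j)) ⟨i0, Finset.mem_univ i0⟩
    set τ : ℝ := p / pb with hτ
    have hτ1 : 1 < τ := (one_lt_div hpb_pos).mpr hpb_lt
    have hτpos : 0 < τ := lt_trans one_pos hτ1
    set a' : Fin N → ℂ := fun j => ((Real.sqrt τ : ℝ) : ℂ) * b j with ha'
    have ha'norm : ∀ j, ‖a' j‖^2 = τ * ‖b j‖^2 := by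
      intro j
      have h1 : a' j = ((Real.sqrt τ : ℝ) : ℂ) * b j := rfl
      rw [h1, norm_mul, mul_pow, Complex.norm_real, Real.norm_eq_abs, sq_abs,
        Real.sq_sqrt hτpos.le]
    have hfeas' : Feasible a' (εopt / τ) := by
      rw [hFeasible]
      refine ⟨?_, (div_pos hεpos hτpos).le, ?_, ?_⟩
      · intro j
        have := hbpos j
        intro h
        rw [show a' j = ((Real.sqrt τ : ℝ) : ℂ) * b j from rfl] at h
        rcases mul_eq_zero.mp h with h' | h'
        · exact absurd (Complex.ofReal_eq_zero.mp h')
            (Real.sqrt_ne_zero'.mpr hτpos)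
        · rw [h'] at this; simp at this
      · intro j
        simp only [Matrix.one_apply_eq, Complex.one_re]
        rw [ha'norm]
        have heq : σ^2 / (τ * ‖b j‖^2) = (σ^2 / ‖b j‖^2) / τ := by
          rw [div_div]; ring_nf
        rw [heq]
        have h5 : σ^2 / ‖b j‖^2 / τ ≤ εopt / τ := by exact (div_le_div_iff_of_pos_right hτpos).mpr (hbnoise j)
        linarith
      · rw [hpow]
        have h2 : ∑ j, c j * ‖a' j‖^2 = τ * pb := by
          rw [hpb, Finset.mul_sum]
          exact Finset.sum_congr rfl fun j _ => by rw [ha'norm j]; ring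
        rw [h2, hτ, div_mul_cancel₀ _ (ne_of_gt hpb_pos)]
    have h3 : εopt / τ < εopt := by
      rw [div_lt_iff₀ hτpos]; nlinarith
    linarith [hopt a' (εopt / τ) hfeas']
  -- conclude
  refine ⟨key, ?_, ?_⟩
  · rw [hEqFeasible]
    refine ⟨hne, hε0, ?_, by rw [hpow]; exact hpower⟩
    intro i
    simp only [Matrix.one_apply_eq, Complex.one_re]
    rw [key i]
    field_simp
    ring
  · intro a' ε' heq
    rw [hEqFeasible] at heq
    obtain ⟨h1, h2, h3, h4⟩ := heq
    apply hopt a' ε'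
    rw [hFeasible]
    exact ⟨h1, h2, fun i => le_of_eq (h3 i), h4⟩
end

section
/- Let N = 2, let H be an invertible 2×2 complex matrix, γ ≥ 0 real, and let P be the 2×2 swap permutation matrix [[0,1],[1,0]]. Define Q = I + γ² P H⁻¹ H⁻ᴴ Pᵀ and S by s_{ij} = Q_{ji} · [(H*)⁻¹ H⁻ᵀ]_{ij}. Then the off-diagonal entries of S satisfy s₁₂ = s₂₁ = γ² |K₁₂|², where K = H⁻¹ H⁻ᴴ; in particular s₁₂ and s₂₁ are equal, real, and nonnegative. -/
open Matrix ComplexOrder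

/-- in the two-station case with the swap permutation, the off-diagonal entries
of the power matrix `S` satisfy `s₁₂ = s₂₁ = γ²|K₁₂|²` where `K = H⁻¹H⁻ᴴ`; in particular they
are equal, real, and nonnegative. -/
theorem two_station_S_offdiag
    (H : Matrix (Fin 2) (Fin 2) ℂ) (hH : IsUnit H.det)
    (γ : ℝ) (hγ : 0 ≤ γ)
    (P : Matrix (Fin 2) (Fin 2) ℂ) (hP : P = !![0, 1; 1, 0])
    (Q : Matrix (Fin 2) (Fin 2) ℂ)
    (hQ : Q = 1 + ((γ : ℂ)^2) • (P * H⁻¹ * (Hᴴ)⁻¹ * Pᵀ))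
    (S : Matrix (Fin 2) (Fin 2) ℂ)
    (hS : ∀ i j, S i j = Q j i * (((H.map (starRingEnd ℂ))⁻¹ * (Hᵀ)⁻¹) i j))
    (K : Matrix (Fin 2) (Fin 2) ℂ) (hK : K = H⁻¹ * (Hᴴ)⁻¹) :
    S 0 1 = S 1 0 ∧
    S 0 1 = ((γ : ℂ)^2) * ((‖K 0 1‖^2 : ℝ) : ℂ) ∧
    0 ≤ S 0 1 := by
  -- H.map star = Hᴴᵀ
  have hmap : H.map (starRingEnd ℂ) = (Hᴴ)ᵀ := by
    ext i j; rfl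
  -- (H.map star)⁻¹ * (Hᵀ)⁻¹ = Kᵀ
  have hM : (H.map (starRingEnd ℂ))⁻¹ * (Hᵀ)⁻¹ = Kᵀ := by
    rw [hmap, ← Matrix.transpose_nonsing_inv, ← Matrix.transpose_nonsing_inv,
      ← Matrix.transpose_mul, hK]
  -- K is Hermitian
  have hherm : Kᴴ = K := by
    rw [hK, Matrix.conjTranspose_mul, ← Matrix.conjTranspose_nonsing_inv,
      Matrix.conjTranspose_conjTranspose, Matrix.conjTranspose_nonsing_inv]
  have h10 : K 1 0 = (starRingEnd ℂ) (K 0 1) := by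
    have := congrFun (congrFun hherm 1) 0
    simpa [Matrix.conjTranspose_apply] using this.symm
  -- P K Pᵀ
  have hPK : P * H⁻¹ * (Hᴴ)⁻¹ * Pᵀ = P * K * Pᵀ := by
    rw [hK]; simp only [Matrix.mul_assoc]
  have hQ10 : Q 1 0 = ((γ:ℂ)^2) * K 0 1 := by
    rw [hQ, hPK, hP]
    simp [Matrix.add_apply, Matrix.smul_apply, Matrix.mul_apply, Fin.sum_univ_two,
      Matrix.one_apply, Matrix.vecMul, dotProduct, Matrix.vecHead, Matrix.vecTail]
  have hQ01 : Q 0 1 = ((γ:ℂ)^2) * K 1 0 := by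
    rw [hQ, hPK, hP]
    simp [Matrix.add_apply, Matrix.smul_apply, Matrix.mul_apply, Fin.sum_univ_two,
      Matrix.one_apply, Matrix.vecMul, dotProduct, Matrix.vecHead, Matrix.vecTail]
  have hS01 : S 0 1 = ((γ:ℂ)^2) * (K 0 1 * (starRingEnd ℂ) (K 0 1)) := by
    rw [hS 0 1, hM, hQ10, Matrix.transpose_apply, h10]; ring
  have hS10 : S 1 0 = ((γ:ℂ)^2) * (K 0 1 * (starRingEnd ℂ) (K 0 1)) := by
    rw [hS 1 0, hM, hQ01, Matrix.transpose_apply, h10]; ring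
  have hval : K 0 1 * (starRingEnd ℂ) (K 0 1) = ((‖K 0 1‖^2 : ℝ) : ℂ) := by
    rw [Complex.mul_conj, Complex.normSq_eq_norm_sq]
  refine ⟨by rw [hS01, hS10], by rw [hS01, hval], ?_⟩
  rw [hS01, hval, ← Complex.ofReal_pow, ← Complex.ofReal_mul]
  rw [Complex.zero_le_real]
  positivity
end

section
/- Let σ > 0, p > 0, q_δ ≥ 0, and s₁₁, s₁₂, s₂₂ be real numbers. Let a₁ > 0 and set a₂ = −σ/√(q_δ + σ²/a₁²). If the power constraint holds with equality, s₁₁ a₁² + 2 s₁₂ a₁ a₂ + s₂₂ a₂² = p, then a₁ satisfies the biquartic equation 0 = s₁₁² q_δ² a₁⁸ + 2 q_δ [s₁₁² σ² + s₁₁ s₂₂ σ² − s₁₁ p q_δ − 2 s₁₂² σ²] a₁⁶ + [σ⁴ (s₁₁ + s₂₂)² + p² q_δ² − 2 p σ² q_δ (2 s₁₁ + s₂₂) − 4 s₁₂² σ⁴] a₁⁴ + [2 p² σ² q_δ − 2 p σ⁴ (s₁₁ + s₂₂)] a₁² + p² σ⁴. -/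
/-- the biquartic equation (65) satisfied by `a₁` in the optimal two-station
equal-SNR zero-forcing solution, where `a₂ = −σ/√(q_δ + σ²/a₁²)` and the relay power
constraint holds with equality. -/
theorem two_station_biquartic
    (σ p qδ s11 s12 s22 a1 a2 : ℝ)
    (hσ : 0 < σ) (hp : 0 < p) (hqδ : 0 ≤ qδ) (ha1 : 0 < a1)
    (ha2 : a2 = -σ / Real.sqrt (qδ + σ^2 / a1^2))
    (hpow : s11 * a1^2 + 2 * s12 * a1 * a2 + s22 * a2^2 = p) :
    0 = s11^2 * qδ^2 * a1^8
        + 2 * qδ * (s11^2 * σ^2 + s11 * s22 * σ^2 - s11 * p * qδ - 2 * s12^2 * σ^2) * a1^6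
        + (σ^4 * (s11 + s22)^2 + p^2 * qδ^2 - 2 * p * σ^2 * qδ * (2 * s11 + s22)
            - 4 * s12^2 * σ^4) * a1^4
        + (2 * p^2 * σ^2 * qδ - 2 * p * σ^4 * (s11 + s22)) * a1^2
        + p^2 * σ^4 := by
  have hu : (0:ℝ) < a1^2 := by positivity
  have ht : (0:ℝ) < qδ + σ^2 / a1^2 := by positivity
  have hst : Real.sqrt (qδ + σ^2 / a1^2) ^ 2 = qδ + σ^2 / a1^2 := Real.sq_sqrt ht.le
  have ha2sq : a2^2 = σ^2 / (qδ + σ^2 / a1^2) := by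
    rw [ha2, div_pow, hst]; ring
  have hQ : (0:ℝ) < qδ * a1^2 + σ^2 := by positivity
  have ha2sq' : a2^2 = σ^2 * a1^2 / (qδ * a1^2 + σ^2) := by
    rw [ha2sq]
    rw [show qδ + σ^2 / a1^2 = (qδ * a1^2 + σ^2) / a1^2 by field_simp,
      div_div_eq_mul_div]
  have key : a2^2 * (qδ * a1^2 + σ^2) = σ^2 * a1^2 := by
    rw [ha2sq', div_mul_cancel₀ _ hQ.ne']
  have hsq : (p - s11 * a1^2 - s22 * a2^2)^2 = 4 * s12^2 * a1^2 * a2^2 := by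
    have h : 2 * s12 * a1 * a2 = p - s11 * a1^2 - s22 * a2^2 := by linarith
    calc (p - s11 * a1^2 - s22 * a2^2)^2 = (2 * s12 * a1 * a2)^2 := by rw [h]
      _ = 4 * s12^2 * a1^2 * a2^2 := by ring
  have key3 : (p * (qδ * a1^2 + σ^2) - s11 * a1^2 * (qδ * a1^2 + σ^2)
      - s22 * (σ^2 * a1^2))^2 = 4 * s12^2 * a1^2 * (σ^2 * a1^2) * (qδ * a1^2 + σ^2) := by
    linear_combination (qδ * a1^2 + σ^2)^2 * hsq
      + (2 * s22 * (qδ * a1^2 + σ^2) * (p - s11 * a1^2 - s22 * a2^2)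
        + s22^2 * (a2^2 * (qδ * a1^2 + σ^2) - σ^2 * a1^2)
        + 4 * s12^2 * a1^2 * (qδ * a1^2 + σ^2)) * key
  linear_combination - key3
end
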